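/- Let b > 0, κ > 0 and l < 0 < h be real numbers. Let u* ∈ U_ad, a ∈ L²(μ), and let λ ∈ L²(μ) satisfy the sign conditions for u*; assume the pointwise variational inequality: for μ-a.e. x, (a(x) + κ·λ(x) + b·u*(x))·(c − u*(x)) ≥ 0 for every c ∈ [l, h]. Let v ∈ L²(μ) satisfy the feasible-direction sign conditions: v ≥ 0 μ-a.e. on {u* = l} and v ≤ 0 μ-a.e. on {u* = h}. Then ∫ (a + b·u*)·v dμ + κ·g'(u*; v) ≥ 0, and equality holds if and only if for μ-a.e. x: v(x) = 0 whenever |a(x) + b·u*(x)| ≠ κ; v(x) ≥ 0 whenever u*(x) = 0 and a(x) = −κ; and v(x) ≤ 0 whenever u*(x) = 0 and a(x) = κ. (Abstract form of the pointwise characterization (3.25)–(3.26) of the critical cone C_{u*}, where a plays the role of −𝕙·p*.) -/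

import Mathlib

open MeasureTheory


lemma ptwise_crit (b κ l h u a lam v : ℝ) (hb : 0 < b) (hκ : 0 < κ) (hl : l < 0) (hh : 0 < h)
    (hu : u ∈ Set.Icc l h)
    (hs1 : 0 < u → lam = 1) (hs2 : u < 0 → lam = -1) (hs3 : u = 0 → lam ∈ Set.Icc (-1 : ℝ) 1)
    (hvi : ∀ c ∈ Set.Icc l h, 0 ≤ (a + κ * lam + b * u) * (c - u))
    (hv1 : u = l → 0 ≤ v) (hv2 : u = h → v ≤ 0) :
    0 ≤ (a + b*u)*v + κ*((if 0 < u then v else 0) - (if u < 0 then v else 0)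
        + (if u = 0 then |v| else 0)) ∧
    ((a + b*u)*v + κ*((if 0 < u then v else 0) - (if u < 0 then v else 0)
        + (if u = 0 then |v| else 0)) = 0 ↔
      ((|a + b*u| ≠ κ → v = 0) ∧ (u = 0 ∧ a = -κ → 0 ≤ v) ∧ (u = 0 ∧ a = κ → v ≤ 0))) := by
  have hlh : l < h := hl.trans hh
  have hvih := hvi h ⟨hlh.le, le_refl _⟩
  have hvil := hvi l ⟨le_refl _, hlh.le⟩
  rcases lt_trichotomy u 0 with hu0 | hu0 | hu0
  · -- u < 0
    have hlam : lam = -1 := hs2 hu0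
    subst hlam
    simp only [if_neg (not_lt.mpr hu0.le), if_pos hu0, if_neg hu0.ne]
    have hG : (a + b*u)*v + κ*(0 - v + 0) = (a + -κ + b*u)*v := by ring
    rw [hG]
    set m := a + -κ + b*u with hm
    have hm1 : 0 ≤ m := by
      have h1 : 0 ≤ (a + κ * -1 + b * u) * (h - u) := hvih
      nlinarith [h1]
    rcases eq_or_lt_of_le hu.1 with hul | hul
    · -- u = l
      have hv0 : 0 ≤ v := hv1 hul.symm
      have habs : |a + b*u| = m + κ := by
        rw [abs_of_pos]; · ring
        · nlinarith
      constructor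
      · exact mul_nonneg hm1 hv0
      · rw [mul_eq_zero, habs]
        constructor
        · rintro (hm0 | hv0')
          · exact ⟨fun hne => absurd (by linarith : m + κ = κ) hne,
              fun hx => absurd hx.1 hu0.ne, fun hx => absurd hx.1 hu0.ne⟩
          · exact ⟨fun _ => hv0', fun hx => absurd hx.1 hu0.ne, fun hx => absurd hx.1 hu0.ne⟩
        · rintro ⟨h1, _, _⟩
          by_cases hm0 : m = 0
          · exact Or.inl hm0
          · exact Or.inr (h1 (fun he => hm0 (by linarith)))
    · -- l < u : m ≤ 0 so m = 0
      have hm2 : m ≤ 0 := by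
        have h1 : 0 ≤ (a + κ * -1 + b * u) * (l - u) := hvil
        nlinarith [h1]
      have hm0 : m = 0 := le_antisymm hm2 hm1
      have habs : |a + b*u| = κ := by
        have : a + b*u = κ := by linarith [hm0]
        rw [this, abs_of_pos hκ]
      constructor
      · rw [hm0]; ring_nf; exact le_refl 0
      · constructor
        · intro _
          exact ⟨fun hne => absurd habs hne,
            fun hx => absurd hx.1 hu0.ne, fun hx => absurd hx.1 hu0.ne⟩
        · intro _
          rw [hm0]; ring
  · -- u = 0
    subst hu0
    rw [if_neg (lt_irrefl (0:ℝ)), if_pos rfl]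
    have hlam := hs3 rfl
    have ha : a = -(κ * lam) := by
      have h1 : 0 ≤ (a + κ * lam + b * 0) * (h - 0) := hvih
      have h2 : 0 ≤ (a + κ * lam + b * 0) * (l - 0) := hvil
      nlinarith [h1, h2]
    have haκ : -κ ≤ a ∧ a ≤ κ := by
      obtain ⟨hl1, hl2⟩ := hlam
      constructor <;> nlinarith [ha]
    have hG : (a + b*0)*v + κ*((0:ℝ) - 0 + |v|) = a*v + κ*|v| := by ring
    rw [hG]
    have hnn : 0 ≤ a*v + κ*|v| := by
      rcases le_or_gt 0 v with hv0 | hv0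
      · rw [abs_of_nonneg hv0]; nlinarith [haκ.1]
      · rw [abs_of_neg hv0]; nlinarith [haκ.2]
    refine ⟨hnn, ?_⟩
    have habs : |a + b*0| = |a| := by ring_nf
    constructor
    · intro h0
      have h1 : |a + b * 0| ≠ κ → v = 0 := by
        intro hne
        have hne' : |a| ≠ κ := by rwa [habs] at hne
        have hlt : |a| < κ := lt_of_le_of_ne (abs_le.mpr ⟨haκ.1, haκ.2⟩) hne'
        by_contra hv0
        have hvpos : 0 < |v| := abs_pos.mpr hv0
        have hav : -(|a| * |v|) ≤ a * v := by
          rw [← abs_mul]; exact neg_abs_le (a * v)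
        linarith [mul_lt_mul_of_pos_right hlt hvpos]
      refine ⟨h1, ?_, ?_⟩
      · rintro ⟨-, haa⟩
        have hvv : κ * (|v| - v) = 0 := by rw [haa] at h0; linarith
        rcases mul_eq_zero.mp hvv with h' | h'
        · exact absurd h' hκ.ne'
        · linarith [abs_nonneg v]
      · rintro ⟨-, haa⟩
        have hvv : κ * (v + |v|) = 0 := by rw [haa] at h0; linarith
        rcases mul_eq_zero.mp hvv with h' | h'
        · exact absurd h' hκ.ne'
        · linarith [abs_nonneg v]
    · rintro ⟨h1, h2, h3⟩
      by_cases hae : |a| = κ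
      · rcases (abs_eq hκ.le).mp hae with haa | haa
        · have hv0 : v ≤ 0 := h3 ⟨rfl, haa⟩
          rw [haa, abs_of_nonpos hv0]; ring
        · have hv0 : 0 ≤ v := h2 ⟨rfl, haa⟩
          rw [haa, abs_of_nonneg hv0]; ring
      · have hv0 : v = 0 := h1 (by rwa [habs])
        rw [hv0]; simp
  · -- 0 < u
    have hlam : lam = 1 := hs1 hu0
    subst hlam
    simp only [if_pos hu0, if_neg (not_lt.mpr hu0.le), if_neg hu0.ne']
    have hG : (a + b*u)*v + κ*(v - 0 + 0) = (a + κ + b*u)*v := by ring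
    rw [hG]
    set m := a + κ + b*u with hm
    have hm2 : m ≤ 0 := by
      have h1 : 0 ≤ (a + κ * 1 + b * u) * (l - u) := hvil
      nlinarith [h1]
    rcases eq_or_lt_of_le hu.2 with hul | hul
    · -- u = h
      have hv0 : v ≤ 0 := hv2 hul
      have habs : |a + b*u| = κ - m := by
        rw [abs_of_neg]; · ring
        · nlinarith
      constructor
      · nlinarith [hm2, hv0]
      · rw [mul_eq_zero, habs]
        constructor
        · rintro (hm0 | hv0')
          · exact ⟨fun hne => absurd (by linarith : κ - m = κ) hne,
              fun hx => absurd hx.1 hu0.ne', fun hx => absurd hx.1 hu0.ne'⟩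
          · exact ⟨fun _ => hv0', fun hx => absurd hx.1 hu0.ne', fun hx => absurd hx.1 hu0.ne'⟩
        · rintro ⟨h1, _, _⟩
          by_cases hm0 : m = 0
          · exact Or.inl hm0
          · exact Or.inr (h1 (fun he => hm0 (by linarith)))
    · -- u < h : m ≥ 0 so m = 0
      have hm1 : 0 ≤ m := by
        have h1 : 0 ≤ (a + κ * 1 + b * u) * (h - u) := hvih
        nlinarith [h1]
      have hm0 : m = 0 := le_antisymm hm2 hm1
      have habs : |a + b*u| = κ := by
        have : a + b*u = -κ := by linarith [hm0]
        rw [this, abs_neg, abs_of_pos hκ]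
      constructor
      · rw [hm0]; ring_nf; exact le_refl 0
      · constructor
        · intro _
          exact ⟨fun hne => absurd habs hne,
            fun hx => absurd hx.1 hu0.ne', fun hx => absurd hx.1 hu0.ne'⟩
        · intro _
          rw [hm0]; ring

/-- Abstract pointwise characterization ((3.25)–(3.26)) of the critical cone: under the
pointwise variational inequality with multiplier `λ` satisfying the sign conditions for
`u*`, and for feasible directions `v`, one has
`∫ (a + b u*) v dμ + κ g'(u*; v) ≥ 0`, with equality if and only if a.e.
`v = 0` where `|a + b u*| ≠ κ`, `v ≥ 0` where `u* = 0 ∧ a = -κ`, and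
`v ≤ 0` where `u* = 0 ∧ a = κ`. -/
theorem critical_cone_characterization
    {X : Type*} [MeasurableSpace X] (μ : Measure X) [IsFiniteMeasure μ]
    (b κ l h : ℝ) (hb : 0 < b) (hκ : 0 < κ) (hl : l < 0) (hh : 0 < h)
    (ustar a lam v : Lp ℝ 2 μ)
    (hustar : ∀ᵐ x ∂μ, ustar x ∈ Set.Icc l h)
    (hsign : ∀ᵐ x ∂μ, (0 < ustar x → lam x = 1) ∧ (ustar x < 0 → lam x = -1) ∧
      (ustar x = 0 → lam x ∈ Set.Icc (-1 : ℝ) 1))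
    (hvi : ∀ᵐ x ∂μ, ∀ c ∈ Set.Icc l h,
      0 ≤ (a x + κ * lam x + b * ustar x) * (c - ustar x))
    (hv : ∀ᵐ x ∂μ, (ustar x = l → 0 ≤ v x) ∧ (ustar x = h → v x ≤ 0)) :
    0 ≤ (∫ x, (a x + b * ustar x) * v x ∂μ)
        + κ * ((∫ x in {x | 0 < ustar x}, v x ∂μ) - (∫ x in {x | ustar x < 0}, v x ∂μ)
          + ∫ x in {x | ustar x = 0}, |v x| ∂μ) ∧
    ((∫ x, (a x + b * ustar x) * v x ∂μ)
        + κ * ((∫ x in {x | 0 < ustar x}, v x ∂μ) - (∫ x in {x | ustar x < 0}, v x ∂μ)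
          + ∫ x in {x | ustar x = 0}, |v x| ∂μ) = 0 ↔
      (∀ᵐ x ∂μ, (|a x + b * ustar x| ≠ κ → v x = 0) ∧
        (ustar x = 0 ∧ a x = -κ → 0 ≤ v x) ∧
        (ustar x = 0 ∧ a x = κ → v x ≤ 0))) := by
  have hum : Measurable (ustar : X → ℝ) := (Lp.stronglyMeasurable ustar).measurable
  have hA : MeasurableSet {x | 0 < ustar x} := measurableSet_lt measurable_const hum
  have hB : MeasurableSet {x | ustar x < 0} := measurableSet_lt hum measurable_const
  have hC : MeasurableSet {x | ustar x = 0} := hum (measurableSet_singleton 0)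
  have hv_int : Integrable (fun x => v x) μ := (Lp.memLp v).integrable (by norm_num)
  have hmul : ∀ (f g : Lp ℝ 2 μ), Integrable (fun x => f x * g x) μ := fun f g => by
    have := L2.integrable_inner (𝕜 := ℝ) g f
    simpa using this
  have hint : Integrable (fun x => (a x + b * ustar x) * v x) μ := by
    have h1 : Integrable (fun x => a x * v x + b * (ustar x * v x)) μ :=
      (hmul a v).add ((hmul ustar v).const_mul b)
    refine h1.congr (Filter.Eventually.of_forall fun x => by ring)
  have hiA : Integrable ({x | 0 < ustar x}.indicator (fun x => v x)) μ := hv_int.indicator hA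
  have hiB : Integrable ({x | ustar x < 0}.indicator (fun x => v x)) μ := hv_int.indicator hB
  have hiC : Integrable ({x | ustar x = 0}.indicator (fun x => |v x|)) μ := hv_int.abs.indicator hC
  have hf2 : Integrable (fun x => {x | 0 < ustar x}.indicator (fun x => v x) x
      - {x | ustar x < 0}.indicator (fun x => v x) x
      + {x | ustar x = 0}.indicator (fun x => |v x|) x) μ := (hiA.sub hiB).add hiC
  set G : X → ℝ := fun x => (a x + b * ustar x) * v x
      + κ * ({x | 0 < ustar x}.indicator (fun x => v x) x
        - {x | ustar x < 0}.indicator (fun x => v x) x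
        + {x | ustar x = 0}.indicator (fun x => |v x|) x) with hGdef
  have hGint : Integrable G μ := hint.add (hf2.const_mul κ)
  have key : (∫ x, (a x + b * ustar x) * v x ∂μ)
        + κ * ((∫ x in {x | 0 < ustar x}, v x ∂μ) - (∫ x in {x | ustar x < 0}, v x ∂μ)
          + ∫ x in {x | ustar x = 0}, |v x| ∂μ) = ∫ x, G x ∂μ := by
    rw [hGdef, integral_add hint (hf2.const_mul κ), integral_const_mul,
      integral_add (f := fun x => {x | 0 < ustar x}.indicator (fun x => v x) x
        - {x | ustar x < 0}.indicator (fun x => v x) x) (hiA.sub hiB) hiC,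
      integral_sub hiA hiB,
      integral_indicator hA, integral_indicator hB, integral_indicator hC]
  have hGind : ∀ x, G x = (a x + b * ustar x) * v x
      + κ * ((if 0 < ustar x then v x else 0) - (if ustar x < 0 then v x else 0)
        + (if ustar x = 0 then |v x| else 0)) := fun x => by
    simp only [hGdef, Set.indicator_apply, Set.mem_setOf_eq]
  have hpt : ∀ᵐ x ∂μ, 0 ≤ G x ∧ (G x = 0 ↔
      ((|a x + b * ustar x| ≠ κ → v x = 0) ∧ (ustar x = 0 ∧ a x = -κ → 0 ≤ v x) ∧
        (ustar x = 0 ∧ a x = κ → v x ≤ 0))) := by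
    filter_upwards [hustar, hsign, hvi, hv] with x hx1 hx2 hx3 hx4
    rw [hGind x]
    exact ptwise_crit b κ l h (ustar x) (a x) (lam x) (v x) hb hκ hl hh hx1
      hx2.1 hx2.2.1 hx2.2.2 hx3 hx4.1 hx4.2
  have hGnn : 0 ≤ᵐ[μ] G := hpt.mono fun x hx => hx.1
  constructor
  · rw [key]
    exact integral_nonneg_of_ae hGnn
  · rw [key, integral_eq_zero_iff_of_nonneg_ae hGnn hGint]
    constructor
    · intro hz
      filter_upwards [hpt, hz] with x hx hzx
      exact hx.2.mp hzx
    · intro hP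
      filter_upwards [hpt, hP] with x hx hPx
      exact hx.2.mpr hPx
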